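/- Let M be a positive semidefinite d×d matrix with M ≤ I, and for ε ∈ [0, 1/10] define B₊ = √((1−2ε²)/2)·I + ε·M, B₋ = √((1−2ε²)/2)·I − ε·M, and B₀ = √2·ε·(I − M²)^{1/2}. Then F₊ = B₊†B₊, F₋ = B₋†B₋, F₀ = B₀†B₀ are positive semidefinite and F₊ + F₋ + F₀ = I, i.e., {F₊, F₋, F₀} is a POVM. -/

import Mathlib

open Matrix ComplexOrder

/-- The square root of a positive semidefinite matrix (removed from Mathlib; old definition). -/
noncomputable def Matrix.PosSemidef.sqrt {n 𝕜 : Type*} [Fintype n] [RCLike 𝕜] [DecidableEq n]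
    {A : Matrix n n 𝕜} (hA : A.PosSemidef) : Matrix n n 𝕜 :=
  hA.1.eigenvectorUnitary.1 * diagonal ((↑) ∘ (√·) ∘ hA.1.eigenvalues) *
    (star hA.1.eigenvectorUnitary : Matrix n n 𝕜)

theorem gentle_three_outcome_povm
    (d : ℕ) (M : Matrix (Fin d) (Fin d) ℂ) (ε : ℝ)
    (hM : M.PosSemidef) (hMle : ((1 : Matrix (Fin d) (Fin d) ℂ) - M).PosSemidef)
    (hIM : ((1 : Matrix (Fin d) (Fin d) ℂ) - M * M).PosSemidef)
    (hε0 : 0 ≤ ε) (hε : ε ≤ 1 / 10) :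
    let Bp : Matrix (Fin d) (Fin d) ℂ :=
      (Real.sqrt ((1 - 2 * ε ^ 2) / 2) : ℂ) • (1 : Matrix (Fin d) (Fin d) ℂ) + (ε : ℂ) • M
    let Bm : Matrix (Fin d) (Fin d) ℂ :=
      (Real.sqrt ((1 - 2 * ε ^ 2) / 2) : ℂ) • (1 : Matrix (Fin d) (Fin d) ℂ) - (ε : ℂ) • M
    let B0 : Matrix (Fin d) (Fin d) ℂ :=
      ((Real.sqrt 2 * ε : ℝ) : ℂ) • hIM.sqrt
    (Bpᴴ * Bp).PosSemidef ∧ (Bmᴴ * Bm).PosSemidef ∧ (B0ᴴ * B0).PosSemidef ∧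
      Bpᴴ * Bp + Bmᴴ * Bm + B0ᴴ * B0 = 1 := by
  intro Bp Bm B0
  refine ⟨Matrix.posSemidef_conjTranspose_mul_self _,
    Matrix.posSemidef_conjTranspose_mul_self _,
    Matrix.posSemidef_conjTranspose_mul_self _, ?_⟩
  have hMH : Mᴴ = M := hM.1
  have hSH : hIM.sqrtᴴ = hIM.sqrt := by
    simp only [Matrix.PosSemidef.sqrt, conjTranspose_mul, diagonal_conjTranspose, Matrix.mul_assoc]
    congr 2
    · simp [Matrix.star_eq_conjTranspose]
    · congr 1; funext k; simp
  have hsq : hIM.sqrt * hIM.sqrt = 1 - M * M := by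
    conv_rhs => rw [hIM.1.spectral_theorem, Unitary.conjStarAlgAut_apply]
    simp only [Matrix.PosSemidef.sqrt, Matrix.mul_assoc]
    congr 1
    rw [← Matrix.mul_assoc (star _ : Matrix _ _ ℂ),
      Unitary.coe_star_mul_self, Matrix.one_mul, ← Matrix.mul_assoc, diagonal_mul_diagonal]
    congr 2
    funext i
    simp only [Function.comp]
    rw [← RCLike.ofReal_mul, Real.mul_self_sqrt (hIM.eigenvalues_nonneg i)]
  have ha : (Real.sqrt ((1 - 2 * ε ^ 2) / 2) : ℂ) * (Real.sqrt ((1 - 2 * ε ^ 2) / 2) : ℂ)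
      = ((1 - 2 * ε ^ 2) / 2 : ℝ) := by
    rw [← Complex.ofReal_mul, Real.mul_self_sqrt]
    nlinarith
  have hb : ((Real.sqrt 2 * ε : ℝ) : ℂ) * ((Real.sqrt 2 * ε : ℝ) : ℂ) = (2 * ε ^ 2 : ℝ) := by
    rw [← Complex.ofReal_mul]
    congr 1
    have : Real.sqrt 2 * Real.sqrt 2 = 2 := Real.mul_self_sqrt (by norm_num)
    nlinarith
  show Bpᴴ * Bp + Bmᴴ * Bm + B0ᴴ * B0 = 1
  simp only [Bp, Bm, B0, conjTranspose_add, conjTranspose_sub, conjTranspose_smul,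
    conjTranspose_one, hMH, hSH, Complex.star_def, Complex.conj_ofReal]
  simp only [Matrix.add_mul, Matrix.mul_add, Matrix.sub_mul, Matrix.mul_sub,
    smul_mul_smul_comm, ha, hb, hsq, smul_sub, smul_add]
  ext i j
  simp [mul_one, one_mul, Matrix.add_apply, Matrix.sub_apply, Matrix.smul_apply,
    Matrix.one_apply, mul_comm]
  split_ifs <;> push_cast <;> ring
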